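/- For every integer z ≥ 1, Σ_{D} 1/φ(D) ≥ z, where the sum is over all monic squarefree polynomials D ∈ F_q[x] with deg D ≤ z and all of whose monic irreducible factors have degree at most z (equivalently, over all monic divisors D of P_z = ∏_{deg P ≤ z} P with deg D ≤ z). -/

import Mathlib

open Polynomial

noncomputable section

variable {F : Type*}

/-- Euler's totient: the number of residue classes modulo `D` coprime to `D`. -/
def polyPhi [Field F] (D : Polynomial F) : ℕ :=
  Nat.card ((Polynomial F ⧸ Ideal.span {D}))ˣ

namespace SumInvPhiAux

open UniqueFactorizationMonoid Finset

set_option linter.unusedSectionVars false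

variable [Field F] [Fintype F]

attribute [local instance 2000] Classical.propDecidable

lemma quot_equiv {D : Polynomial F} (hD : D ≠ 0) :
    Nonempty ((Polynomial F ⧸ Ideal.span {D}) ≃ (Fin D.natDegree → F)) := by
  let pb := AdjoinRoot.powerBasis hD
  have hdim : pb.dim = D.natDegree := rfl
  exact ⟨pb.basis.equivFun.toEquiv.trans
    (Equiv.arrowCongr (finCongr hdim) (Equiv.refl F))⟩

lemma card_quot {D : Polynomial F} (hD : D ≠ 0) :
    Nat.card (Polynomial F ⧸ Ideal.span {D}) = Fintype.card F ^ D.natDegree := by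
  classical
  obtain ⟨e⟩ := quot_equiv hD
  rw [Nat.card_congr e, Nat.card_eq_fintype_card, Fintype.card_fun, Fintype.card_fin]

lemma phi_irred {P : Polynomial F} (hP : Irreducible P) :
    polyPhi P = Fintype.card F ^ P.natDegree - 1 := by
  classical
  haveI : (Ideal.span {P} : Ideal (Polynomial F)).IsMaximal :=
    PrincipalIdealRing.isMaximal_of_irreducible hP
  letI : Field (Polynomial F ⧸ Ideal.span {P}) := Ideal.Quotient.field _
  have h1 : polyPhi P = Nat.card (Polynomial F ⧸ Ideal.span {P}) - 1 :=
    Nat.card_units _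
  rw [h1, card_quot hP.ne_zero]

lemma phi_one : polyPhi (1 : Polynomial F) = 1 := by
  haveI : Subsingleton (Polynomial F ⧸ Ideal.span {(1 : Polynomial F)}) :=
    Ideal.Quotient.subsingleton_iff.mpr Ideal.span_singleton_one
  haveI : Subsingleton ((Polynomial F ⧸ Ideal.span {(1 : Polynomial F)}))ˣ :=
    ⟨fun a b => Units.ext (Subsingleton.elim _ _)⟩
  haveI : Inhabited ((Polynomial F ⧸ Ideal.span {(1 : Polynomial F)}))ˣ := ⟨1⟩
  haveI : Unique ((Polynomial F ⧸ Ideal.span {(1 : Polynomial F)}))ˣ := Unique.mk' _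
  exact Nat.card_unique

lemma phi_mul {A B : Polynomial F} (h : IsCoprime A B) :
    polyPhi (A * B) = polyPhi A * polyPhi B := by
  have h' : IsCoprime (Ideal.span {A}) (Ideal.span {B}) :=
    (Ideal.isCoprime_span_singleton_iff A B).2 h
  have e1 : (Polynomial F ⧸ Ideal.span {A * B}) ≃+*
      (Polynomial F ⧸ Ideal.span {A}) × (Polynomial F ⧸ Ideal.span {B}) := by
    rw [← Ideal.span_singleton_mul_span_singleton]
    exact Ideal.quotientMulEquivQuotientProd _ _ h'
  calc polyPhi (A * B)
      = Nat.card (((Polynomial F ⧸ Ideal.span {A}) × (Polynomial F ⧸ Ideal.span {B}))ˣ) :=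
        Nat.card_congr (Units.mapEquiv e1.toMulEquiv).toEquiv
    _ = Nat.card ((Polynomial F ⧸ Ideal.span {A})ˣ × (Polynomial F ⧸ Ideal.span {B})ˣ) :=
        Nat.card_congr MulEquiv.prodUnits.toEquiv
    _ = polyPhi A * polyPhi B := Nat.card_prod _ _

lemma coprime_aux {P Q : Polynomial F} (hP : P.Monic) (hiP : Irreducible P)
    (hQ : Q.Monic) (hiQ : Irreducible Q) (hne : P ≠ Q) : IsCoprime P Q :=
  (hiP.coprime_iff_not_dvd).2 fun hdvd =>
    hne (eq_of_monic_of_associated hP hQ (hiP.associated_of_dvd hiQ hdvd))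

lemma coprime_prod_aux {P : Polynomial F} (hP : P.Monic) (hiP : Irreducible P)
    {s : Finset (Polynomial F)} (hs : ∀ Q ∈ s, Q.Monic ∧ Irreducible Q) (hPs : P ∉ s) :
    IsCoprime P (∏ Q ∈ s, Q) :=
  IsCoprime.prod_right fun Q hQ =>
    coprime_aux hP hiP (hs Q hQ).1 (hs Q hQ).2 (fun h => hPs (h ▸ hQ))

lemma phi_prod {s : Finset (Polynomial F)} (hs : ∀ Q ∈ s, Q.Monic ∧ Irreducible Q) :
    polyPhi (∏ Q ∈ s, Q) = ∏ Q ∈ s, (Fintype.card F ^ Q.natDegree - 1) := by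
  classical
  induction s using Finset.induction_on with
  | empty => simpa using phi_one
  | insert P s hPs ih =>
    have hP := hs P (Finset.mem_insert_self _ _)
    have hs' : ∀ Q ∈ s, Q.Monic ∧ Irreducible Q := fun Q hQ => hs Q (Finset.mem_insert_of_mem hQ)
    rw [Finset.prod_insert hPs, Finset.prod_insert hPs,
      phi_mul (coprime_prod_aux hP.1 hP.2 hs' hPs), phi_irred hP.2, ih hs']

lemma squarefree_prod {s : Finset (Polynomial F)} (hs : ∀ Q ∈ s, Q.Monic ∧ Irreducible Q) :
    Squarefree (∏ Q ∈ s, Q) := by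
  classical
  induction s using Finset.induction_on with
  | empty => simpa using squarefree_one
  | insert P s hPs ih =>
    have hP := hs P (Finset.mem_insert_self _ _)
    have hs' : ∀ Q ∈ s, Q.Monic ∧ Irreducible Q := fun Q hQ => hs Q (Finset.mem_insert_of_mem hQ)
    rw [Finset.prod_insert hPs]
    exact squarefree_mul_iff.mpr
      ⟨(coprime_prod_aux hP.1 hP.2 hs' hPs).isRelPrime, hP.2.squarefree, ih hs'⟩

/-- multiplicity of `P` in `N`, with a fixed choice of `Decidable` instance. -/
def cnt (N P : Polynomial F) : ℕ := Multiset.count P (normalizedFactors N)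

lemma mem_nf_of_mem_pf {N P : Polynomial F} (hP : P ∈ primeFactors N) :
    P ∈ normalizedFactors N := Multiset.mem_toFinset.mp hP

lemma count_pos_of_mem_pf {N P : Polynomial F} (hP : P ∈ primeFactors N) :
    1 ≤ cnt N P :=
  Multiset.one_le_count_iff_mem.mpr (Multiset.mem_toFinset.mp hP)

lemma monic_of_primeFactor {N P : Polynomial F} (hP : P ∈ primeFactors N) : P.Monic := by
  have h1 : P ∈ normalizedFactors N := Multiset.mem_toFinset.mp hP
  have h2 := normalize_normalized_factor _ h1
  have h3 := (prime_of_normalized_factor _ h1).ne_zero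
  rw [← h2]
  exact monic_normalize h3

lemma irred_of_primeFactor {N P : Polynomial F} (hP : P ∈ primeFactors N) : Irreducible P :=
  (prime_of_normalized_factor _ (Multiset.mem_toFinset.mp hP)).irreducible

lemma primeFactors_monic_irred {N : Polynomial F} :
    ∀ P ∈ primeFactors N, P.Monic ∧ Irreducible P :=
  fun _ hP => ⟨monic_of_primeFactor hP, irred_of_primeFactor hP⟩

lemma radical_monic (N : Polynomial F) : (radical N).Monic :=
  monic_prod_of_monic _ _ fun _ hP => monic_of_primeFactor hP

lemma radical_squarefree (N : Polynomial F) : Squarefree (radical N) :=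
  squarefree_prod primeFactors_monic_irred

/-- membership in primeFactors for a monic irreducible. -/
lemma mem_primeFactors_iff_dvd {N P : Polynomial F} (hN : N ≠ 0)
    (hPm : P.Monic) (hPi : Irreducible P) : P ∈ primeFactors N ↔ P ∣ N := by
  constructor
  · intro h
    exact dvd_of_mem_normalizedFactors (Multiset.mem_toFinset.mp h)
  · intro h
    obtain ⟨Q, hQ, hassoc⟩ := exists_mem_normalizedFactors_of_dvd hN hPi h
    have : P = Q := eq_of_monic_of_associated hPm (monic_of_primeFactor
      (Multiset.mem_toFinset.mpr hQ)) hassoc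
    exact Multiset.mem_toFinset.mpr (this ▸ hQ)

/-- a monic polynomial is the product of its prime factors with multiplicities -/
lemma monic_eq_prod_pow {N : Polynomial F} (hN : N.Monic) :
    N = ∏ P ∈ primeFactors N, P ^ cnt N P := by
  have hmon : (∏ P ∈ primeFactors N, P ^ cnt N P).Monic :=
    monic_prod_of_monic _ _ fun P hP => (monic_of_primeFactor hP).pow _
  have h2 : (normalizedFactors N).prod
      = ∏ P ∈ primeFactors N, P ^ cnt N P :=
    Finset.prod_multiset_count _
  exact eq_of_monic_of_associated hN hmon (h2 ▸ (prod_normalizedFactors hN.ne_zero).symm)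

/-- a monic squarefree polynomial is the product of its distinct prime factors -/
lemma sf_eq_prod {D : Polynomial F} (hD : D.Monic) (hsf : Squarefree D) :
    D = ∏ P ∈ primeFactors D, P := by
  have h := monic_eq_prod_pow hD
  conv_lhs => rw [h]
  refine Finset.prod_congr rfl fun P hP => ?_
  have hc : cnt D P = 1 := Multiset.count_eq_one_of_mem
    ((squarefree_iff_nodup_normalizedFactors hD.ne_zero).mp hsf)
    (Multiset.mem_toFinset.mp hP)
  rw [hc, pow_one]

/-- in a radical fiber, the prime factor sets agree -/
lemma primeFactors_eq_of_radical {N D : Polynomial F} (hN : N ≠ 0) (hD : D ≠ 0)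
    (h : radical N = D) : primeFactors N = primeFactors D := by
  ext P
  constructor
  · intro hP
    rw [mem_primeFactors_iff_dvd hD (monic_of_primeFactor hP) (irred_of_primeFactor hP), ← h]
    exact Finset.dvd_prod_of_mem id hP
  · intro hP
    rw [mem_primeFactors_iff_dvd hN (monic_of_primeFactor hP) (irred_of_primeFactor hP)]
    have h1 : P ∣ D := dvd_of_mem_normalizedFactors (Multiset.mem_toFinset.mp hP)
    exact h1.trans (h ▸ radical_dvd_self (a := N))

lemma phi_sf {D : Polynomial F} (hD : D.Monic) (hsf : Squarefree D) :
    polyPhi D = ∏ P ∈ primeFactors D, (Fintype.card F ^ P.natDegree - 1) := by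
  conv_lhs => rw [sf_eq_prod hD hsf]
  exact phi_prod primeFactors_monic_irred

/-! ### Counting lemmas -/

lemma box_finite (z : ℕ) : {N : Polynomial F | N.Monic ∧ N.natDegree ≤ z}.Finite := by
  haveI : Finite (degreeLT F (z+1)) :=
    Finite.of_equiv _ (degreeLTEquiv F (z+1)).toEquiv.symm
  apply Set.Finite.subset (Set.toFinite ((degreeLT F (z+1) : Submodule F (Polynomial F)) :
    Set (Polynomial F)))
  intro N hN
  simp only [SetLike.mem_coe, mem_degreeLT]
  calc N.degree ≤ (N.natDegree : WithBot ℕ) := degree_le_natDegree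
  _ < ((z + 1 : ℕ) : WithBot ℕ) := by
      exact_mod_cast Nat.cast_lt.mpr (Nat.lt_succ_of_le hN.2)

lemma card_monic_eq (n : ℕ) :
    Nat.card {f : Polynomial F // f.Monic ∧ f.natDegree = n} = Fintype.card F ^ n := by
  classical
  have e : {f : Polynomial F // f.Monic ∧ f.natDegree = n} ≃ degreeLT F n := by
    refine ⟨fun f => ⟨f.1 - X^n, ?_⟩, fun g => ⟨X^n + g.1, ?_, ?_⟩, ?_, ?_⟩
    · have hdf : (f.1 : Polynomial F).degree = (X^n : Polynomial F).degree := by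
        rw [degree_X_pow, degree_eq_natDegree f.2.1.ne_zero, f.2.2]
      have := degree_sub_lt hdf f.2.1.ne_zero
        (by rw [f.2.1.leadingCoeff, (monic_X_pow n).leadingCoeff])
      rw [mem_degreeLT]
      calc (f.1 - X^n).degree < f.1.degree := this
      _ ≤ (n : WithBot ℕ) := by
          rw [degree_eq_natDegree f.2.1.ne_zero, f.2.2]
    · exact monic_X_pow_add (mem_degreeLT.mp g.2)
    · have hdeg : (X^n + g.1 : Polynomial F).degree = (n : WithBot ℕ) := by
        rw [degree_add_eq_left_of_degree_lt, degree_X_pow]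
        rw [degree_X_pow]; exact mem_degreeLT.mp g.2
      exact natDegree_eq_of_degree_eq_some hdeg
    · intro f; apply Subtype.ext; ring
    · intro g; apply Subtype.ext; ring
  rw [Nat.card_congr (e.trans (degreeLTEquiv F n).toEquiv), Nat.card_eq_fintype_card,
    Fintype.card_fun, Fintype.card_fin]

lemma filter_card (z n : ℕ) (hn : n ≤ z)
    {inst : DecidablePred fun N : Polynomial F => N.natDegree = n} :
    ((@Finset.filter (Polynomial F) (fun N => N.natDegree = n) inst
      (box_finite (F:=F) z).toFinset).card)
      = Fintype.card F ^ n := by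
  classical
  rw [Finset.filter_congr_decidable]
  rw [← card_monic_eq (F:=F) n]
  rw [← Nat.card_eq_finsetCard]
  apply Nat.card_congr
  apply Equiv.subtypeEquiv (Equiv.refl _)
  intro N
  simp only [Equiv.refl_apply, Finset.mem_filter, Set.Finite.mem_toFinset, Set.mem_setOf_eq]
  constructor
  · rintro ⟨⟨h1, _⟩, h3⟩; exact ⟨h1, h3⟩
  · rintro ⟨h1, h2⟩; exact ⟨⟨h1, h2 ▸ hn⟩, h2⟩

lemma sum_box (z : ℕ) :
    ∑ N ∈ (box_finite (F:=F) z).toFinset, ((Fintype.card F : ℝ))⁻¹ ^ N.natDegree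
      = (z : ℝ) + 1 := by
  classical
  have hq0 : (0:ℝ) < (Fintype.card F : ℝ) := by exact_mod_cast Fintype.card_pos
  have hmap : ∀ N ∈ (box_finite (F:=F) z).toFinset, N.natDegree ∈ Finset.range (z+1) :=
    fun N hN => Finset.mem_range.mpr (Nat.lt_succ_of_le ((Set.Finite.mem_toFinset _).mp hN).2)
  rw [← Finset.sum_fiberwise_of_maps_to hmap (fun N => ((Fintype.card F : ℝ))⁻¹ ^ N.natDegree)]
  have hinner : ∀ n ∈ Finset.range (z+1),
      (∑ N ∈ (box_finite (F:=F) z).toFinset.filter (fun N => N.natDegree = n),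
        ((Fintype.card F : ℝ))⁻¹ ^ N.natDegree) = 1 := by
    intro n hn
    have h1 : ∀ N ∈ (box_finite (F:=F) z).toFinset.filter (fun N => N.natDegree = n),
        ((Fintype.card F : ℝ))⁻¹ ^ N.natDegree = ((Fintype.card F : ℝ))⁻¹ ^ n := by
      intro N hN
      rw [(Finset.mem_filter.mp hN).2]
    rw [Finset.sum_congr rfl h1, Finset.sum_const,
      filter_card z n (Nat.lt_succ_iff.mp (Finset.mem_range.mp hn)), nsmul_eq_mul]
    push_cast
    rw [← mul_pow, mul_inv_cancel₀ hq0.ne', one_pow]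
  rw [Finset.sum_congr rfl hinner, Finset.sum_const, Finset.card_range, nsmul_eq_mul,
    mul_one]
  push_cast
  ring

/-! ### The geometric series bound -/

lemma geom_bound {x : ℝ} (h0 : 0 < x) (h1 : x < 1) (z : ℕ) :
    ∑ e ∈ Finset.Icc 1 z, x ^ e ≤ x / (1 - x) := by
  have h2 : (0:ℝ) < 1 - x := by linarith
  have hstep : ∑ e ∈ Finset.Icc 1 z, x ^ e = x * ∑ e ∈ Finset.range z, x ^ e := by
    rw [← Finset.Ico_add_one_right_eq_Icc, Finset.sum_Ico_eq_sum_range, Nat.add_sub_cancel,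
      Finset.mul_sum]
    exact Finset.sum_congr rfl fun k _ => by rw [pow_add, pow_one]
  rw [hstep, div_eq_mul_inv]
  apply mul_le_mul_of_nonneg_left _ h0.le
  rw [geom_sum_eq h1.ne z]
  have hxz : (0:ℝ) ≤ x ^ z := pow_nonneg h0.le z
  rw [show (x ^ z - 1) / (x - 1) = (1 - x ^ z) / (1 - x) by
    rw [← neg_div_neg_eq]; ring_nf]
  rw [inv_eq_one_div]
  gcongr
  linarith

lemma geom_bound' {y : ℝ} (hy : 1 < y) (z : ℕ) :
    ∑ e ∈ Finset.Icc 1 z, (y⁻¹) ^ e ≤ (y - 1)⁻¹ := by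
  have hy0 : (0:ℝ) < y := lt_trans one_pos hy
  have hx0 : (0:ℝ) < y⁻¹ := inv_pos.mpr hy0
  have hx1 : y⁻¹ < 1 := by
    rw [inv_lt_one_iff₀]; right; exact hy
  have heq : y⁻¹ / (1 - y⁻¹) = (y - 1)⁻¹ := by
    have hy1 : y - 1 ≠ 0 := sub_ne_zero.mpr hy.ne'
    rw [show (1:ℝ) - y⁻¹ = (y - 1) / y by rw [sub_div, div_self hy0.ne', one_div],
      div_div_eq_mul_div, inv_mul_cancel₀ hy0.ne', one_div]
  calc ∑ e ∈ Finset.Icc 1 z, (y⁻¹) ^ e ≤ y⁻¹ / (1 - y⁻¹) := geom_bound hx0 hx1 z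
  _ = (y - 1)⁻¹ := heq

/-! ### The key fiber bound -/

lemma fiber_le (z : ℕ) {D : Polynomial F} (hD : D.Monic) (hsf : Squarefree D)
    {inst : DecidablePred fun N : Polynomial F => radical N = D} :
    ∑ N ∈ @Finset.filter (Polynomial F) (fun N => radical N = D) inst
        (box_finite (F:=F) z).toFinset, ((Fintype.card F : ℝ))⁻¹ ^ N.natDegree
      ≤ ((polyPhi D : ℝ))⁻¹ := by
  classical
  rw [Finset.filter_congr_decidable]
  have hq1 : 1 < Fintype.card F := Fintype.one_lt_card
  have hq0 : (0:ℝ) < (Fintype.card F : ℝ) := by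
    have : 0 < Fintype.card F := Fintype.card_pos
    exact_mod_cast this
  have hD0 : D ≠ 0 := hD.ne_zero
  set fib := (box_finite (F:=F) z).toFinset.filter (fun N => radical N = D) with hfibdef
  have hfib' : ∀ N ∈ fib, N.Monic ∧ N.natDegree ≤ z ∧ radical N = D := by
    intro N hN
    obtain ⟨h1, h2⟩ := Finset.mem_filter.mp hN
    obtain ⟨h3, h4⟩ := (Set.Finite.mem_toFinset _).mp h1
    exact ⟨h3, h4, h2⟩
  have hpf : ∀ N ∈ fib, primeFactors N = primeFactors D := fun N hN =>
    primeFactors_eq_of_radical (hfib' N hN).1.ne_zero hD0 (hfib' N hN).2.2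
  have hrep : ∀ N ∈ fib,
      N = ∏ P ∈ primeFactors D, P ^ cnt N P := by
    intro N hN
    conv_lhs => rw [monic_eq_prod_pow (hfib' N hN).1]
    rw [hpf N hN]
  have hdeg : ∀ N ∈ fib, N.natDegree
      = ∑ P ∈ primeFactors D, cnt N P * P.natDegree := by
    intro N hN
    conv_lhs => rw [hrep N hN]
    rw [Polynomial.natDegree_prod _ _ (fun P hP =>
      pow_ne_zero _ (monic_of_primeFactor hP).ne_zero)]
    exact Finset.sum_congr rfl fun P _ => Polynomial.natDegree_pow _ _
  have hweight : ∀ N ∈ fib, ((Fintype.card F : ℝ))⁻¹ ^ N.natDegree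
      = ∏ P : ↥(primeFactors D),
          (((Fintype.card F : ℝ))⁻¹ ^ (P : Polynomial F).natDegree)
            ^ cnt N (P : Polynomial F) := by
    intro N hN
    rw [hdeg N hN]
    calc ((Fintype.card F : ℝ))⁻¹
          ^ (∑ P ∈ primeFactors D, cnt N P * P.natDegree)
        = ∏ P ∈ primeFactors D, ((Fintype.card F : ℝ))⁻¹
            ^ (cnt N P * P.natDegree) :=
          (Finset.prod_pow_eq_pow_sum _ _ _).symm
      _ = ∏ P ∈ primeFactors D, (((Fintype.card F : ℝ))⁻¹ ^ P.natDegree)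
            ^ cnt N P := by
          refine Finset.prod_congr rfl fun P _ => ?_
          rw [mul_comm, pow_mul]
      _ = _ := (Finset.prod_coe_sort _ _).symm
  have hmem : ∀ N ∈ fib,
      (fun P : ↥(primeFactors D) => cnt N (P : Polynomial F))
        ∈ Fintype.piFinset (fun _ : ↥(primeFactors D) => Finset.Icc 1 z) := by
    intro N hN
    rw [Fintype.mem_piFinset]
    intro P
    rw [Finset.mem_Icc]
    constructor
    · exact count_pos_of_mem_pf (N := N)
        ((Finset.ext_iff.mp (hpf N hN) (P : Polynomial F)).mpr P.2)
    · have hd : 0 < (P : Polynomial F).natDegree := (irred_of_primeFactor P.2).natDegree_pos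
      calc cnt N (P : Polynomial F)
          ≤ cnt N (P : Polynomial F)
              * (P : Polynomial F).natDegree := Nat.le_mul_of_pos_right _ hd
        _ ≤ ∑ Q ∈ primeFactors D, cnt N Q * Q.natDegree :=
            Finset.single_le_sum
              (f := fun Q => cnt N Q * Q.natDegree)
              (fun Q _ => Nat.zero_le _) P.2
        _ = N.natDegree := (hdeg N hN).symm
        _ ≤ z := (hfib' N hN).2.1
  have hinj : ∀ N1 ∈ fib, ∀ N2 ∈ fib,
      (fun P : ↥(primeFactors D) => cnt N1 (P : Polynomial F))
        = (fun P : ↥(primeFactors D) =>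
            cnt N2 (P : Polynomial F)) → N1 = N2 := by
    intro N1 h1 N2 h2 h
    rw [hrep N1 h1, hrep N2 h2]
    refine Finset.prod_congr rfl fun P hP => ?_
    have := congrFun h (⟨P, hP⟩ : ↥(primeFactors D))
    simp only at this
    rw [this]
  have gnonneg : ∀ c : ↥(primeFactors D) → ℕ, 0 ≤ ∏ P : ↥(primeFactors D),
      (((Fintype.card F : ℝ))⁻¹ ^ (P : Polynomial F).natDegree) ^ c P :=
    fun c => Finset.prod_nonneg fun P _ =>
      pow_nonneg (pow_nonneg (inv_nonneg.mpr hq0.le) _) _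
  calc ∑ N ∈ fib, ((Fintype.card F : ℝ))⁻¹ ^ N.natDegree
      = ∑ c ∈ fib.image (fun N (P : ↥(primeFactors D)) =>
          cnt N (P : Polynomial F)),
          ∏ P : ↥(primeFactors D),
            (((Fintype.card F : ℝ))⁻¹ ^ (P : Polynomial F).natDegree) ^ c P := by
        rw [Finset.sum_image hinj]
        exact Finset.sum_congr rfl hweight
    _ ≤ ∑ c ∈ Fintype.piFinset (fun _ : ↥(primeFactors D) => Finset.Icc 1 z),
          ∏ P : ↥(primeFactors D),
            (((Fintype.card F : ℝ))⁻¹ ^ (P : Polynomial F).natDegree) ^ c P := by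
        apply Finset.sum_le_sum_of_subset_of_nonneg
        · intro c hc
          obtain ⟨N, hN, rfl⟩ := Finset.mem_image.mp hc
          exact hmem N hN
        · intro c _ _
          exact gnonneg c
    _ = ∏ P : ↥(primeFactors D), ∑ e ∈ Finset.Icc 1 z,
          (((Fintype.card F : ℝ))⁻¹ ^ (P : Polynomial F).natDegree) ^ e :=
        (Finset.prod_univ_sum _ _).symm
    _ ≤ ∏ P : ↥(primeFactors D),
          ((Fintype.card F : ℝ) ^ (P : Polynomial F).natDegree - 1)⁻¹ := by
        apply Finset.prod_le_prod
        · intro P _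
          exact Finset.sum_nonneg fun e _ =>
            pow_nonneg (pow_nonneg (inv_nonneg.mpr hq0.le) _) _
        · intro P _
          have hd : 0 < (P : Polynomial F).natDegree := (irred_of_primeFactor P.2).natDegree_pos
          have hy : 1 < (Fintype.card F : ℝ) ^ (P : Polynomial F).natDegree :=
            one_lt_pow₀ (by exact_mod_cast hq1) hd.ne'
          have hgb := geom_bound' hy z
          simpa [inv_pow] using hgb
    _ = ((polyPhi D : ℝ))⁻¹ := by
        have hphi : (polyPhi D : ℝ)
            = ∏ P : ↥(primeFactors D),
                ((Fintype.card F : ℝ) ^ (P : Polynomial F).natDegree - 1) := by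
          rw [phi_sf hD hsf, Nat.cast_prod, ← Finset.prod_coe_sort]
          refine Finset.prod_congr rfl fun P _ => ?_
          have h1 : 1 ≤ Fintype.card F ^ (P : Polynomial F).natDegree :=
            Nat.one_le_pow _ _ (by omega)
          rw [Nat.cast_sub h1, Nat.cast_pow, Nat.cast_one]
        rw [hphi, ← Finset.prod_inv_distrib]

end SumInvPhiAux

attribute [local instance 2000] Classical.propDecidable

/-- For every integer `z ≥ 1`, `Σ 1/φ(D) ≥ z`, the sum over monic squarefree `D`
with `deg D ≤ z` all of whose monic irreducible factors have degree at most `z`. -/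
theorem sum_inv_phi_lower_bound
    (F : Type*) [Field F] [Fintype F] (q : ℕ) (hq : Fintype.card F = q)
    (z : ℕ) (hz : 1 ≤ z) :
    (z : ℝ) ≤
      ∑ᶠ D ∈ {D : Polynomial F | D.Monic ∧ Squarefree D ∧ D.natDegree ≤ z ∧
          ∀ P : Polynomial F, P.Monic → Irreducible P → P ∣ D → P.natDegree ≤ z},
        ((polyPhi D : ℝ))⁻¹ := by
  classical
  have hS : {D : Polynomial F | D.Monic ∧ Squarefree D ∧ D.natDegree ≤ z ∧
      ∀ P : Polynomial F, P.Monic → Irreducible P → P ∣ D → P.natDegree ≤ z}.Finite :=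
    (SumInvPhiAux.box_finite z).subset (fun D hD => ⟨hD.1, hD.2.2.1⟩)
  rw [finsum_mem_eq_finite_toFinset_sum _ hS]
  have hmap : ∀ N ∈ (SumInvPhiAux.box_finite (F:=F) z).toFinset,
      UniqueFactorizationMonoid.radical N ∈ hS.toFinset := by
    intro N hN
    obtain ⟨hNm, hNz⟩ := (Set.Finite.mem_toFinset _).mp hN
    have hN0 : N ≠ 0 := hNm.ne_zero
    have hrz : (UniqueFactorizationMonoid.radical N).natDegree ≤ z :=
      le_trans (Polynomial.natDegree_le_of_dvd
        (UniqueFactorizationMonoid.radical_dvd_self (a := N)) hN0) hNz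
    rw [Set.Finite.mem_toFinset]
    refine ⟨SumInvPhiAux.radical_monic N, SumInvPhiAux.radical_squarefree N, hrz, ?_⟩
    intro P _ _ hP
    exact le_trans (Polynomial.natDegree_le_of_dvd hP
      (UniqueFactorizationMonoid.radical_ne_zero (a := N))) hrz
  calc (z : ℝ) ≤ (z : ℝ) + 1 := by linarith
  _ = ∑ N ∈ (SumInvPhiAux.box_finite (F:=F) z).toFinset,
        ((Fintype.card F : ℝ))⁻¹ ^ N.natDegree := (SumInvPhiAux.sum_box z).symm
  _ = ∑ D ∈ hS.toFinset, ∑ N ∈ (SumInvPhiAux.box_finite (F:=F) z).toFinset.filter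
        (fun N => UniqueFactorizationMonoid.radical N = D),
        ((Fintype.card F : ℝ))⁻¹ ^ N.natDegree :=
      (Finset.sum_fiberwise_of_maps_to hmap _).symm
  _ ≤ ∑ D ∈ hS.toFinset, ((polyPhi D : ℝ))⁻¹ := by
      apply Finset.sum_le_sum
      intro D hD
      obtain ⟨h1, h2, _, _⟩ := (Set.Finite.mem_toFinset _).mp hD
      exact SumInvPhiAux.fiber_le z h1 h2
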